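/- Let g: R^3 -> [0, infinity) be Schur-concave with X_1 >= X_2 >= X_3 and X_2 < M_13 := (X_1 + X_3)/2, and suppose all integrals below are finite and positive. Define p_12 = (integral over [0, inf) of g(X_1 + z, X_2 - z, X_3) dz) / (integral over [-D_12, inf) of g(X_1 + z, X_2 - z, X_3) dz) with D_12 = (X_1 - X_2)/2, and p_13 = (integral over [0, inf) of g(X_1 + z, X_2, X_3 - z) dz) / (integral over [-D_13, inf) of g(X_1 + z, X_2, X_3 - z) dz) with D_13 = (X_1 - X_3)/2. Then p_12 >= p_13. -/

import Mathlib

open MeasureTheory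

/-- The decreasing rearrangement of a tuple of reals. -/
noncomputable def decSort {n : ℕ} (a : Fin n → ℝ) : Fin n → ℝ :=
  a ∘ Tuple.sort (fun i => -a i)

/-- `a` majorizes `b`: partial sums of decreasing rearrangements dominate, total sums equal. -/
noncomputable def Majorizes {n : ℕ} (a b : Fin n → ℝ) : Prop :=
  (∀ k : ℕ, k < n →
      ∑ j ∈ Finset.univ.filter (fun j : Fin n => (j : ℕ) < k), decSort a j ≥
        ∑ j ∈ Finset.univ.filter (fun j : Fin n => (j : ℕ) < k), decSort b j) ∧
  ∑ j, a j = ∑ j, b j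

/-- `g` is Schur-concave if majorization reverses its ordering. -/
noncomputable def SchurConcave {n : ℕ} (g : (Fin n → ℝ) → ℝ) : Prop :=
  ∀ x y : Fin n → ℝ, Majorizes x y → g x ≤ g y

lemma decSort_antitone {n : ℕ} (a : Fin n → ℝ) : Antitone (decSort a) := by
  intro i j hij
  have h := Tuple.monotone_sort (fun i => -a i) hij
  simp only [Function.comp_apply, neg_le_neg_iff] at h
  exact h

lemma decSort_apply {n : ℕ} (a : Fin n → ℝ) (i : Fin n) :
    decSort a i = a (Tuple.sort (fun i => -a i) i) := rfl

lemma decSort_sum {n : ℕ} (a : Fin n → ℝ) : ∑ j, decSort a j = ∑ j, a j :=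
  Equiv.sum_comp (Tuple.sort (fun i => -a i)) a

lemma le_decSort_zero {n : ℕ} (a : Fin (n + 1) → ℝ) (j : Fin (n + 1)) :
    a j ≤ decSort a 0 := by
  set σ := Tuple.sort (fun i => -a i)
  have : a j = decSort a (σ.symm j) := by
    simp [decSort_apply, σ]
  rw [this]
  exact decSort_antitone a (Fin.zero_le _)

lemma decSort_last_le {n : ℕ} (a : Fin (n + 1) → ℝ) (j : Fin (n + 1)) :
    decSort a (Fin.last n) ≤ a j := by
  set σ := Tuple.sort (fun i => -a i)
  have : a j = decSort a (σ.symm j) := by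
    simp [decSort_apply, σ]
  rw [this]
  exact decSort_antitone a (Fin.le_last _)

lemma majorizes_of_three (a b : Fin 3 → ℝ)
    (hsum : a 0 + a 1 + a 2 = b 0 + b 1 + b 2)
    (hmax : ∃ i, ∀ j, b j ≤ a i)
    (hmin : ∃ i, ∀ j, a i ≤ b j) :
    Majorizes a b := by
  have hsa := decSort_sum a
  have hsb := decSort_sum b
  simp only [Fin.sum_univ_three] at hsa hsb
  constructor
  · intro k hk
    interval_cases k
    · simp
    · have : ∀ c : Fin 3 → ℝ,
          ∑ j ∈ Finset.univ.filter (fun j : Fin 3 => (j : ℕ) < 1), decSort c j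
            = decSort c 0 := by
        intro c
        rw [Finset.sum_filter, Fin.sum_univ_three]
        norm_num
      rw [ge_iff_le, this, this]
      obtain ⟨i, hi⟩ := hmax
      calc decSort b 0 = b (Tuple.sort (fun i => -b i) 0) := rfl
        _ ≤ a i := hi _
        _ ≤ decSort a 0 := le_decSort_zero a i
    · have : ∀ c : Fin 3 → ℝ,
          ∑ j ∈ Finset.univ.filter (fun j : Fin 3 => (j : ℕ) < 2), decSort c j
            = decSort c 0 + decSort c 1 := by
        intro c
        rw [Finset.sum_filter, Fin.sum_univ_three]
        norm_num
      rw [ge_iff_le, this, this]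
      obtain ⟨i, hi⟩ := hmin
      have h1 : decSort a (Fin.last 2) ≤ a i := decSort_last_le a i
      have h2 : a i ≤ b (Tuple.sort (fun i => -b i) (Fin.last 2)) := hi _
      have h3 : decSort b (Fin.last 2) = b (Tuple.sort (fun i => -b i) (Fin.last 2)) := rfl
      have hlast : (Fin.last 2 : Fin 3) = 2 := rfl
      rw [hlast] at h1 h3
      linarith [h3 ▸ h2]
  · rw [Fin.sum_univ_three, Fin.sum_univ_three, hsum]

/-- The winner-versus-runner-up p-value is the largest: `p₁₂ ≥ p₁₃`. -/
theorem pvalue_comparison (g : (Fin 3 → ℝ) → ℝ) (hg : SchurConcave g)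
    (hpos : ∀ x, 0 ≤ g x) (X₁ X₂ X₃ : ℝ) (h12 : X₁ ≥ X₂) (h23 : X₂ ≥ X₃)
    (hM : X₂ < (X₁ + X₃) / 2)
    (hint12 : IntegrableOn (fun z => g ![X₁ + z, X₂ - z, X₃]) (Set.Ici (-((X₁ - X₂) / 2))))
    (hint13 : IntegrableOn (fun z => g ![X₁ + z, X₂, X₃ - z]) (Set.Ici (-((X₁ - X₃) / 2))))
    (hden12 : 0 < ∫ z in Set.Ici (-((X₁ - X₂) / 2)), g ![X₁ + z, X₂ - z, X₃])
    (hden13 : 0 < ∫ z in Set.Ici (-((X₁ - X₃) / 2)), g ![X₁ + z, X₂, X₃ - z]) :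
    (∫ z in Set.Ici (0 : ℝ), g ![X₁ + z, X₂ - z, X₃]) /
        (∫ z in Set.Ici (-((X₁ - X₂) / 2)), g ![X₁ + z, X₂ - z, X₃]) ≥
      (∫ z in Set.Ici (0 : ℝ), g ![X₁ + z, X₂, X₃ - z]) /
        (∫ z in Set.Ici (-((X₁ - X₃) / 2)), g ![X₁ + z, X₂, X₃ - z]) := by
  set D12 := (X₁ - X₂) / 2 with hD12
  set D13 := (X₁ - X₃) / 2 with hD13
  have hD12nn : 0 ≤ D12 := by rw [hD12]; linarith
  have hDle : D12 ≤ D13 := by rw [hD12, hD13]; linarith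
  -- pointwise comparison on [0, ∞)
  have hpt1 : ∀ z ∈ Set.Ici (0 : ℝ), g ![X₁ + z, X₂, X₃ - z] ≤ g ![X₁ + z, X₂ - z, X₃] := by
    intro z hz
    simp only [Set.mem_Ici] at hz
    apply hg
    apply majorizes_of_three
    · simp [Matrix.cons_val_zero, Matrix.cons_val_one]; ring
    · refine ⟨0, fun j => ?_⟩
      fin_cases j <;> simp <;> linarith
    · refine ⟨2, fun j => ?_⟩
      fin_cases j <;> simp <;> linarith
  -- pointwise comparison on [-D12, 0)
  have hpt2 : ∀ z ∈ Set.Ico (-D12) (0 : ℝ),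
      g ![X₁ + z, X₂ - z, X₃] ≤ g ![X₁ + z, X₂, X₃ - z] := by
    intro z hz
    obtain ⟨hz1, hz2⟩ := hz
    rw [hD12] at hz1
    apply hg
    apply majorizes_of_three
    · simp [Matrix.cons_val_zero, Matrix.cons_val_one]; ring
    · refine ⟨0, fun j => ?_⟩
      fin_cases j <;> simp <;> linarith
    · refine ⟨2, fun j => ?_⟩
      fin_cases j <;> simp <;> linarith
  -- integrability facts
  have hint12' : IntegrableOn (fun z => g ![X₁ + z, X₂ - z, X₃]) (Set.Ici (0 : ℝ)) :=
    hint12.mono_set (Set.Ici_subset_Ici.mpr (by linarith))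
  have hint13'' : IntegrableOn (fun z => g ![X₁ + z, X₂, X₃ - z]) (Set.Ici (0 : ℝ)) :=
    hint13.mono_set (Set.Ici_subset_Ici.mpr (by linarith))
  have hint12T : IntegrableOn (fun z => g ![X₁ + z, X₂ - z, X₃]) (Set.Ico (-D12) 0) :=
    hint12.mono_set (fun x hx => hx.1)
  have hint13T' : IntegrableOn (fun z => g ![X₁ + z, X₂, X₃ - z]) (Set.Ico (-D12) 0) :=
    hint13.mono_set (fun x hx => le_trans (by linarith) hx.1)
  have hint13T : IntegrableOn (fun z => g ![X₁ + z, X₂, X₃ - z]) (Set.Ico (-D13) 0) :=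
    hint13.mono_set (fun x hx => hx.1)
  -- split the denominators
  have hsplit12 : (∫ z in Set.Ici (-D12), g ![X₁ + z, X₂ - z, X₃])
      = (∫ z in Set.Ico (-D12) 0, g ![X₁ + z, X₂ - z, X₃])
        + ∫ z in Set.Ici (0 : ℝ), g ![X₁ + z, X₂ - z, X₃] := by
    have hd : Disjoint (Set.Ico (-D12) (0:ℝ)) (Set.Ici (0:ℝ)) :=
      Set.disjoint_left.mpr fun x hx hx2 => absurd hx.2 (not_lt.mpr hx2)
    rw [← setIntegral_union hd measurableSet_Ici hint12T hint12',
      Set.Ico_union_Ici_eq_Ici (by linarith)]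
  have hsplit13 : (∫ z in Set.Ici (-D13), g ![X₁ + z, X₂, X₃ - z])
      = (∫ z in Set.Ico (-D13) 0, g ![X₁ + z, X₂, X₃ - z])
        + ∫ z in Set.Ici (0 : ℝ), g ![X₁ + z, X₂, X₃ - z] := by
    have hd : Disjoint (Set.Ico (-D13) (0:ℝ)) (Set.Ici (0:ℝ)) :=
      Set.disjoint_left.mpr fun x hx hx2 => absurd hx.2 (not_lt.mpr hx2)
    rw [← setIntegral_union hd measurableSet_Ici hint13T hint13'',
      Set.Ico_union_Ici_eq_Ici (by linarith)]
  -- numerator comparison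
  have hN : (∫ z in Set.Ici (0 : ℝ), g ![X₁ + z, X₂, X₃ - z])
      ≤ ∫ z in Set.Ici (0 : ℝ), g ![X₁ + z, X₂ - z, X₃] :=
    setIntegral_mono_on hint13'' hint12' measurableSet_Ici hpt1
  -- tail comparison
  have hT : (∫ z in Set.Ico (-D12) 0, g ![X₁ + z, X₂ - z, X₃])
      ≤ ∫ z in Set.Ico (-D13) 0, g ![X₁ + z, X₂, X₃ - z] := by
    calc (∫ z in Set.Ico (-D12) 0, g ![X₁ + z, X₂ - z, X₃])
        ≤ ∫ z in Set.Ico (-D12) 0, g ![X₁ + z, X₂, X₃ - z] :=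
          setIntegral_mono_on hint12T hint13T' measurableSet_Ico hpt2
      _ ≤ ∫ z in Set.Ico (-D13) 0, g ![X₁ + z, X₂, X₃ - z] :=
          setIntegral_mono_set hint13T (Filter.Eventually.of_forall fun z => hpos _)
            (HasSubset.Subset.eventuallyLE
              (Set.Ico_subset_Ico_left (by linarith)))
  have hNnn : 0 ≤ ∫ z in Set.Ici (0 : ℝ), g ![X₁ + z, X₂, X₃ - z] :=
    setIntegral_nonneg measurableSet_Ici fun z _ => hpos _
  have hTnn : 0 ≤ ∫ z in Set.Ico (-D12) 0, g ![X₁ + z, X₂ - z, X₃] :=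
    setIntegral_nonneg measurableSet_Ico fun z _ => hpos _
  rw [ge_iff_le, div_le_div_iff₀ hden13 hden12]
  rw [hsplit12, hsplit13]
  rw [hsplit12] at hden12
  rw [hsplit13] at hden13
  nlinarith [mul_le_mul hN hT hTnn (le_trans hNnn hN)]
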